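/- (Uniqueness of asymptotic expansions) Let M be an asymptotic scale (multiplicative ℝ-vector subspace of 𝓗^{>0} with at most one representative per archimedean class) and suppose the zero germ 0 ∈ 𝒞 has asymptotic expansion F = Σ a_m m ∈ ℝ[[M]]. Then F = 0. Consequently, every germ f ∈ 𝒞 has at most one asymptotic expansion in ℝ[[M]]. -/

import Mathlib

open Filter

/-- `f ≺ g`: `g` is ultimately nonzero and `f/g → 0` at `+∞`. -/
def Prec (f g : ℝ → ℝ) : Prop :=
  (∀ᶠ x in atTop, g x ≠ 0) ∧ Tendsto (fun x => f x / g x) atTop (nhds 0)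

/-- `f ≍ g`: same archimedean class. -/
def AsympEq (f g : ℝ → ℝ) : Prop := f =O[atTop] g ∧ g =O[atTop] f

/-- `M` is an asymptotic scale: a multiplicative `ℝ`-vector subspace of the positive
germs of a Hardy field with at most one representative per archimedean class. -/
structure AsymScale (M : Set (ℝ → ℝ)) : Prop where
  pos : ∀ m ∈ M, ∀ x, 0 < m x
  one_mem : (fun _ : ℝ => (1 : ℝ)) ∈ M
  mul_mem : ∀ m ∈ M, ∀ n ∈ M, (fun x => m x * n x) ∈ M
  rpow_mem : ∀ m ∈ M, ∀ r : ℝ, (fun x => m x ^ r) ∈ M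
  total : ∀ m ∈ M, ∀ n ∈ M, m = n ∨ Prec m n ∨ Prec n m
  scale : ∀ m ∈ M, ∀ n ∈ M, AsympEq m n → m = n

/-- `f` has asymptotic expansion `Σ_{m ∈ M} a m · m` at `+∞`. -/
def HasAE (M : Set (ℝ → ℝ)) (f : ℝ → ℝ) (a : (ℝ → ℝ) → ℝ) : Prop :=
  (∀ m, a m ≠ 0 → m ∈ M) ∧
  (∀ n ∈ M, {m : ℝ → ℝ | a m ≠ 0 ∧ Prec n m}.Finite) ∧
  ∀ n ∈ M, ∀ hfin : {m : ℝ → ℝ | a m ≠ 0 ∧ (m = n ∨ Prec n m)}.Finite,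
    Prec (fun x => f x - ∑ m ∈ hfin.toFinset, a m * m x) n

lemma Prec.trans' {f g h : ℝ → ℝ} (h1 : Prec f g) (h2 : Prec g h) : Prec f h := by
  refine ⟨h2.1, ?_⟩
  have := h1.2.mul h2.2
  rw [mul_zero] at this
  refine this.congr' ?_
  filter_upwards [h1.1] with x hg
  field_simp

lemma Prec.irrefl' {m : ℝ → ℝ} (hpos : ∀ x, 0 < m x) : ¬ Prec m m := by
  rintro ⟨-, h⟩
  have h1 : Tendsto (fun x : ℝ => m x / m x) atTop (nhds 1) := by
    refine tendsto_const_nhds.congr' ?_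
    filter_upwards with x
    rw [div_self (hpos x).ne']
  exact one_ne_zero (tendsto_nhds_unique h1 h)

/-- A finite nonempty subset of an asymptotic scale has a maximal element. -/
lemma exists_max {M : Set (ℝ → ℝ)} (hM : AsymScale M) (s : Finset (ℝ → ℝ))
    (hne : s.Nonempty) (hsub : ∀ m ∈ s, m ∈ M) :
    ∃ m₀ ∈ s, ∀ m ∈ s, ¬ Prec m₀ m := by
  classical
  revert hne hsub
  induction s using Finset.induction_on with
  | empty => intro hne _; exact absurd hne (by simp)
  | @insert c s hc ih =>
    intro hne hsub
    have hcM : c ∈ M := hsub c (Finset.mem_insert_self c s)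
    rcases s.eq_empty_or_nonempty with rfl | hsne
    · refine ⟨c, Finset.mem_insert_self c _, ?_⟩
      intro m hm
      rw [Finset.mem_insert] at hm
      rcases hm with rfl | hm
      · exact Prec.irrefl' (hM.pos _ hcM)
      · simp at hm
    · obtain ⟨m₀, hm₀s, hmax⟩ := ih hsne (fun m hm => hsub m (Finset.mem_insert_of_mem hm))
      have hm₀M : m₀ ∈ M := hsub m₀ (Finset.mem_insert_of_mem hm₀s)
      rcases hM.total m₀ hm₀M c hcM with rfl | hlt | hgt
      · exact ⟨m₀, Finset.mem_insert_self _ _, fun m hm => by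
          rcases Finset.mem_insert.1 hm with rfl | hm
          · exact Prec.irrefl' (hM.pos _ hm₀M)
          · exact hmax m hm⟩
      · -- m₀ ≺ c, so c is maximal
        refine ⟨c, Finset.mem_insert_self _ _, fun m hm hcm => ?_⟩
        rcases Finset.mem_insert.1 hm with rfl | hm
        · exact Prec.irrefl' (hM.pos _ hcM) hcm
        · exact hmax m hm (hlt.trans' hcm)
      · -- c ≺ m₀, so m₀ is maximal
        refine ⟨m₀, Finset.mem_insert_of_mem hm₀s, fun m hm hmm => ?_⟩
        rcases Finset.mem_insert.1 hm with rfl | hm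
        · exact hmax m₀ hm₀s (hmm.trans' hgt)
        · exact hmax m hm hmm

lemma Prec.sub' {f g n : ℝ → ℝ} (h1 : Prec f n) (h2 : Prec g n) :
    Prec (fun x => f x - g x) n := by
  refine ⟨h1.1, ?_⟩
  have := h1.2.sub h2.2
  rw [sub_zero] at this
  exact this.congr (fun x => (sub_div _ _ _).symm)

lemma zero_expansion {M : Set (ℝ → ℝ)} (hM : AsymScale M) (a : (ℝ → ℝ) → ℝ)
    (ha : HasAE M (fun _ => 0) a) : a = 0 := by
  classical
  by_contra h
  obtain ⟨m₁, hm₁⟩ : ∃ m, a m ≠ 0 := by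
    by_contra h'
    push_neg at h'
    exact h (funext fun m => h' m)
  have hm₁M : m₁ ∈ M := ha.1 m₁ hm₁
  -- the set of support elements ⪰ m₁ is finite and nonempty
  have hT : ({m : ℝ → ℝ | a m ≠ 0 ∧ (m = m₁ ∨ Prec m₁ m)}).Finite :=
    (((ha.2.1 m₁ hm₁M).insert m₁).subset (by
      rintro m ⟨hm, rfl | hm'⟩
      · exact Set.mem_insert _ _
      · exact Set.mem_insert_of_mem _ ⟨hm, hm'⟩))
  set T : Finset (ℝ → ℝ) := hT.toFinset with hTdef
  have hm₁T : m₁ ∈ T := by simp [hTdef, Set.Finite.mem_toFinset, hm₁]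
  have hTM : ∀ m ∈ T, m ∈ M := by
    intro m hm
    rw [hTdef, Set.Finite.mem_toFinset] at hm
    exact ha.1 m hm.1
  obtain ⟨m₀, hm₀T, hmax⟩ := exists_max hM T ⟨m₁, hm₁T⟩ hTM
  rw [hTdef, Set.Finite.mem_toFinset] at hm₀T
  obtain ⟨hm₀ne, hm₀ge⟩ := hm₀T
  have hm₀M : m₀ ∈ M := ha.1 m₀ hm₀ne
  -- the set of support elements ⪰ m₀ is exactly {m₀}
  have hSeq : {m : ℝ → ℝ | a m ≠ 0 ∧ (m = m₀ ∨ Prec m₀ m)} = {m₀} := by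
    ext m
    simp only [Set.mem_setOf_eq, Set.mem_singleton_iff]
    constructor
    · rintro ⟨hm, rfl | hm'⟩
      · rfl
      · exfalso
        have hmT : m ∈ T := by
          rw [hTdef, Set.Finite.mem_toFinset]
          refine ⟨hm, ?_⟩
          rcases hm₀ge with rfl | h₀
        
          · exact Or.inr hm'
          · exact Or.inr (h₀.trans' hm')
        exact hmax m hmT hm'
    · rintro rfl
      exact ⟨hm₀ne, Or.inl rfl⟩
  have hSfin : ({m : ℝ → ℝ | a m ≠ 0 ∧ (m = m₀ ∨ Prec m₀ m)}).Finite := by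
    rw [hSeq]; exact Set.finite_singleton _
  have hkey := ha.2.2 m₀ hm₀M hSfin
  have htf : hSfin.toFinset = {m₀} := by
    ext m
    rw [Set.Finite.mem_toFinset, hSeq]
    simp
  rw [htf] at hkey
  simp only [Finset.sum_singleton] at hkey
  -- (0 - a m₀ * m₀ x) / m₀ x = - a m₀
  have hconst : Tendsto (fun _ : ℝ => -a m₀) atTop (nhds 0) := by
    refine hkey.2.congr (fun x => ?_)
    have hpos := hM.pos m₀ hm₀M x
    field_simp
    ring
  have : -a m₀ = 0 := tendsto_nhds_unique tendsto_const_nhds hconst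
  exact hm₀ne (by linarith [neg_eq_zero.mp this])

/-- Uniqueness of asymptotic expansions: if the zero germ has asymptotic expansion
`F ∈ ℝ[[M]]`, then `F = 0`; consequently every germ has at most one asymptotic
expansion in `ℝ[[M]]`. -/
theorem stmt16 (M : Set (ℝ → ℝ)) (hM : AsymScale M) :
    (∀ a : (ℝ → ℝ) → ℝ, HasAE M (fun _ => 0) a → a = 0) ∧
    (∀ (f : ℝ → ℝ) (a b : (ℝ → ℝ) → ℝ), HasAE M f a → HasAE M f b → a = b) := by
  classical
  refine ⟨zero_expansion hM, ?_⟩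
  intro f a b ha hb
  set c : (ℝ → ℝ) → ℝ := fun m => a m - b m with hcdef
  have hc : HasAE M (fun _ => 0) c := by
    refine ⟨?_, ?_, ?_⟩
    · intro m hm
      by_cases hma : a m ≠ 0
      · exact ha.1 m hma
      · push_neg at hma
        refine hb.1 m ?_
        simp only [hcdef, hma, zero_sub, ne_eq, neg_eq_zero] at hm
        exact hm
    · intro n hn
      refine ((ha.2.1 n hn).union (hb.2.1 n hn)).subset ?_
      rintro m ⟨hm, hm'⟩
      by_cases hma : a m ≠ 0
      · exact Or.inl ⟨hma, hm'⟩
      · push_neg at hma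
        refine Or.inr ⟨?_, hm'⟩
        simp only [hcdef, hma, zero_sub, ne_eq, neg_eq_zero] at hm
        exact hm
    · intro n hn hfin
      -- get the finite sets for a and b
      have hSa : ({m : ℝ → ℝ | a m ≠ 0 ∧ (m = n ∨ Prec n m)}).Finite :=
        ((ha.2.1 n hn).insert n).subset (by
          rintro m ⟨hm, rfl | hm'⟩
          · exact Set.mem_insert _ _
          · exact Set.mem_insert_of_mem _ ⟨hm, hm'⟩)
      have hSb : ({m : ℝ → ℝ | b m ≠ 0 ∧ (m = n ∨ Prec n m)}).Finite :=
        ((hb.2.1 n hn).insert n).subset (by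
          rintro m ⟨hm, rfl | hm'⟩
          · exact Set.mem_insert _ _
          · exact Set.mem_insert_of_mem _ ⟨hm, hm'⟩)
      have hka := ha.2.2 n hn hSa
      have hkb := hb.2.2 n hn hSb
      set U : Finset (ℝ → ℝ) := hSa.toFinset ∪ hSb.toFinset with hUdef
      have hcond : ∀ m ∈ U, m = n ∨ Prec n m := by
        intro m hm
        rw [hUdef, Finset.mem_union, Set.Finite.mem_toFinset, Set.Finite.mem_toFinset] at hm
        rcases hm with hm | hm
        · exact hm.2
        · exact hm.2
      have hsum : ∀ x, ∑ m ∈ hfin.toFinset, c m * m x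
          = (∑ m ∈ hSa.toFinset, a m * m x) - ∑ m ∈ hSb.toFinset, b m * m x := by
        intro x
        have h1 : ∑ m ∈ hfin.toFinset, c m * m x = ∑ m ∈ U, c m * m x := by
          refine Finset.sum_subset ?_ ?_
          · intro m hm
            rw [Set.Finite.mem_toFinset] at hm
            obtain ⟨hcm, hm'⟩ := hm
            rw [hUdef, Finset.mem_union, Set.Finite.mem_toFinset, Set.Finite.mem_toFinset]
            by_cases hma : a m ≠ 0
            · exact Or.inl ⟨hma, hm'⟩
            · push_neg at hma
              refine Or.inr ⟨?_, hm'⟩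
              simp only [hcdef, hma, zero_sub, ne_eq, neg_eq_zero] at hcm
              exact hcm
          · intro m hmU hm
            rw [Set.Finite.mem_toFinset, Set.mem_setOf_eq] at hm
            rcases (em (c m = 0)) with hc0 | hc0
            · rw [hc0, zero_mul]
            · exact absurd ⟨hc0, hcond m hmU⟩ hm
        have h2 : ∑ m ∈ hSa.toFinset, a m * m x = ∑ m ∈ U, a m * m x := by
          refine Finset.sum_subset (Finset.subset_union_left) ?_
          intro m hmU hm
          rw [Set.Finite.mem_toFinset, Set.mem_setOf_eq] at hm
          rcases (em (a m = 0)) with h0 | h0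
          · rw [h0, zero_mul]
          · exact absurd ⟨h0, hcond m hmU⟩ hm
        have h3 : ∑ m ∈ hSb.toFinset, b m * m x = ∑ m ∈ U, b m * m x := by
          refine Finset.sum_subset (Finset.subset_union_right) ?_
          intro m hmU hm
          rw [Set.Finite.mem_toFinset, Set.mem_setOf_eq] at hm
          rcases (em (b m = 0)) with h0 | h0
          · rw [h0, zero_mul]
          · exact absurd ⟨h0, hcond m hmU⟩ hm
        rw [h1, h2, h3, ← Finset.sum_sub_distrib]
        refine Finset.sum_congr rfl (fun m _ => ?_)
        simp [hcdef, sub_mul]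
      have := hka.sub' hkb
      refine ⟨this.1, this.2.congr (fun x => ?_)⟩
      simp only [hsum x]
      ring
  have hc0 := zero_expansion hM c hc
  funext m
  have : c m = 0 := by rw [hc0]; rfl
  have : a m - b m = 0 := this
  linarith
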